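/- For every n ≥ 1, the derivative of the path domination polynomial at -1 satisfies: D'(P_n,-1) = 0 if n ≡ 0 or 2 (mod 4), D'(P_n,-1) = (n+1)/2 if n ≡ 1 (mod 4), and D'(P_n,-1) = -(n+1)/2 if n ≡ 3 (mod 4). -/

import Mathlib

open SimpleGraph Polynomial Finset

open Classical in
/-- The number of dominating sets of `G` of cardinality `i`. -/
noncomputable def domCount {V : Type*} [Fintype V] [DecidableEq V]
    (G : SimpleGraph V) (i : ℕ) : ℕ :=
  (Finset.univ.filter fun S : Finset V =>
    S.card = i ∧ ∀ v : V, v ∈ S ∨ ∃ u ∈ S, G.Adj u v).card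

/-- The domination polynomial of `G`. -/
noncomputable def domPoly {V : Type*} [Fintype V] [DecidableEq V]
    (G : SimpleGraph V) : Polynomial ℤ :=
  ∑ i ∈ Finset.range (Fintype.card V + 1), Polynomial.C (domCount G i : ℤ) * Polynomial.X ^ i

/-- The domination number of `G`. -/
noncomputable def domNum {V : Type*} [Fintype V] [DecidableEq V] (G : SimpleGraph V) : ℕ :=
  sInf {i | ∃ S : Finset V, S.card = i ∧ ∀ v : V, v ∈ S ∨ ∃ u ∈ S, G.Adj u v}

namespace PathDP


/-- vertex `v` is dominated by `S` (in an ambient path, with `S ⊆ range n`). -/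
def Dcond (S : Finset ℕ) (v : ℕ) : Prop := v ∈ S ∨ v + 1 ∈ S ∨ (0 < v ∧ v - 1 ∈ S)

instance (S : Finset ℕ) (v : ℕ) : Decidable (Dcond S v) := by unfold Dcond; infer_instance

def predA (n : ℕ) (S : Finset ℕ) : Prop := (∀ v < n, Dcond S v) ∧ (n - 1) ∈ S
def predB (n : ℕ) (S : Finset ℕ) : Prop := (∀ v < n, Dcond S v) ∧ (n - 1) ∉ S
def predC (n : ℕ) (S : Finset ℕ) : Prop := (∀ v < n - 1, Dcond S v) ∧ ¬ Dcond S (n - 1)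

instance (n : ℕ) (S : Finset ℕ) : Decidable (predA n S) := by unfold predA; infer_instance
instance (n : ℕ) (S : Finset ℕ) : Decidable (predB n S) := by unfold predB; infer_instance
instance (n : ℕ) (S : Finset ℕ) : Decidable (predC n S) := by unfold predC; infer_instance

noncomputable def pA (n : ℕ) : Polynomial ℤ :=
  ∑ S ∈ (range n).powerset, if predA n S then X ^ S.card else 0
noncomputable def pB (n : ℕ) : Polynomial ℤ :=
  ∑ S ∈ (range n).powerset, if predB n S then X ^ S.card else 0
noncomputable def pC (n : ℕ) : Polynomial ℤ :=
  ∑ S ∈ (range n).powerset, if predC n S then X ^ S.card else 0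

lemma base_pA : pA 1 = X := by
  rw [pA, show (range 1).powerset = {∅, {0}} from rfl,
    sum_insert (by decide), sum_singleton, if_neg (by decide), if_pos (by decide)]
  simp

lemma base_pB : pB 1 = 0 := by
  rw [pB, show (range 1).powerset = {∅, {0}} from rfl,
    sum_insert (by decide), sum_singleton, if_neg (by decide), if_neg (by decide)]
  simp

lemma base_pC : pC 1 = 1 := by
  rw [pC, show (range 1).powerset = {∅, {0}} from rfl,
    sum_insert (by decide), sum_singleton, if_pos (by decide), if_neg (by decide)]
  simp

lemma notmem (n : ℕ) {S : Finset ℕ} (hS : S ∈ (range n).powerset) : n ∉ S := fun h =>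
  absurd (mem_powerset.1 hS h) (by simp)

lemma notmem' (n : ℕ) {S : Finset ℕ} (hS : S ∈ (range n).powerset) : n + 1 ∉ S := fun h =>
  absurd (mem_powerset.1 hS h) (by simp)

lemma pB_succ (n : ℕ) (hn : 1 ≤ n) : pB (n + 1) = pA n := by
  rw [pB, pA, range_add_one, sum_powerset_insert (by simp)]
  have h2 : ∀ S ∈ (range n).powerset,
      (if predB (n+1) (insert n S) then (X:Polynomial ℤ) ^ (insert n S).card else 0) = 0 := by
    intro S hS
    rw [if_neg]
    rintro ⟨-, h⟩
    exact h (by simp)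
  rw [sum_congr rfl h2, sum_const_zero, add_zero]
  refine sum_congr rfl fun S hS => ?_
  have hnS := notmem n hS
  have hn1S := notmem' n hS
  congr 1
  simp only [eq_iff_iff]
  constructor
  · rintro ⟨hall, -⟩
    refine ⟨fun v hv => hall v (by omega), ?_⟩
    rcases hall n (by omega) with h | h | ⟨h0, h⟩
    · exact absurd h hnS
    · exact absurd h hn1S
    · exact h
  · rintro ⟨hall, hmem⟩
    refine ⟨fun v hv => ?_, by simpa using hnS⟩
    rcases Nat.lt_or_ge v n with h | h
    · exact hall v h
    · have hv' : v = n := by omega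
      subst hv'
      exact Or.inr (Or.inr ⟨by omega, hmem⟩)

lemma pC_succ (n : ℕ) (hn : 1 ≤ n) : pC (n + 1) = pB n := by
  rw [pC, pB, range_add_one, sum_powerset_insert (by simp)]
  have h2 : ∀ S ∈ (range n).powerset,
      (if predC (n+1) (insert n S) then (X:Polynomial ℤ) ^ (insert n S).card else 0) = 0 := by
    intro S hS
    rw [if_neg]
    rintro ⟨-, h⟩
    exact h (Or.inl (by simp))
  rw [sum_congr rfl h2, sum_const_zero, add_zero]
  refine sum_congr rfl fun S hS => ?_
  have hnS := notmem n hS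
  have hn1S := notmem' n hS
  congr 1
  simp only [eq_iff_iff, predC, predB]
  constructor
  · rintro ⟨hall, hnd⟩
    refine ⟨fun v hv => hall v (by omega), fun h => hnd ?_⟩
    simp only [Nat.add_sub_cancel]
    exact Or.inr (Or.inr ⟨hn, h⟩)
  · rintro ⟨hall, h1⟩
    refine ⟨fun v hv => hall v (by omega), ?_⟩
    simp only [Nat.add_sub_cancel]
    rintro (h | h | ⟨h0, h⟩)
    · exact hnS h
    · exact hn1S h
    · exact h1 h

lemma Dcond_mono {S : Finset ℕ} {n v : ℕ} (h : Dcond S v) : Dcond (insert n S) v := by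
  rcases h with h | h | ⟨h0, h⟩
  · exact Or.inl (mem_insert_of_mem h)
  · exact Or.inr (Or.inl (mem_insert_of_mem h))
  · exact Or.inr (Or.inr ⟨h0, mem_insert_of_mem h⟩)

lemma pA_succ (n : ℕ) (hn : 1 ≤ n) : pA (n + 1) = X * (pA n + pB n + pC n) := by
  rw [pA, pA, pB, pC, range_add_one, sum_powerset_insert (by simp)]
  have h1 : ∀ S ∈ (range n).powerset,
      (if predA (n+1) S then (X:Polynomial ℤ) ^ S.card else 0) = 0 := by
    intro S hS
    rw [if_neg]
    rintro ⟨-, h⟩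
    exact notmem n hS (by simpa using h)
  rw [sum_congr rfl h1, sum_const_zero, zero_add, mul_add, mul_add, mul_sum, mul_sum, mul_sum,
    ← sum_add_distrib, ← sum_add_distrib]
  refine sum_congr rfl fun S hS => ?_
  have hnS := notmem n hS
  have hn1S := notmem' n hS
  have hSsub := mem_powerset.1 hS
  have hcard : (insert n S).card = S.card + 1 := card_insert_of_notMem hnS
  -- key equivalence
  have key : predA (n+1) (insert n S) ↔ (predA n S ∨ predB n S ∨ predC n S) := by
    have hQ : predA (n+1) (insert n S) ↔ (∀ v < n - 1, Dcond S v) := by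
      constructor
      · rintro ⟨hall, -⟩
        intro v hv
        rcases hall v (by omega) with h | h | ⟨h0, h⟩
        · exact Or.inl ((Finset.mem_insert.1 h).resolve_left (by omega))
        · exact Or.inr (Or.inl ((Finset.mem_insert.1 h).resolve_left (by omega)))
        · exact Or.inr (Or.inr ⟨h0, (Finset.mem_insert.1 h).resolve_left (by omega)⟩)
      · intro hq
        refine ⟨fun v hv => ?_, mem_insert_self n S⟩
        rcases Nat.lt_or_ge (v + 1) n with h | h
        · exact Dcond_mono (hq v (by omega))
        · rcases Nat.lt_or_ge v n with h' | h'
          · -- v = n - 1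
            exact Or.inr (Or.inl (by
              have : v + 1 = n := by omega
              rw [this]; exact mem_insert_self n S))
          · exact Or.inl (by rw [show v = n by omega]; exact mem_insert_self n S)
    rw [hQ]
    constructor
    · intro hq
      by_cases hD : Dcond S (n - 1)
      · have hall : ∀ v < n, Dcond S v := fun v hv => by
          rcases Nat.lt_or_ge (v + 1) n with h | h
          · exact hq v (by omega)
          · have : v = n - 1 := by omega
            subst this; exact hD
        by_cases hm : (n - 1) ∈ S
        · exact Or.inl ⟨hall, hm⟩
        · exact Or.inr (Or.inl ⟨hall, hm⟩)
      · exact Or.inr (Or.inr ⟨hq, hD⟩)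
    · rintro (⟨hall, -⟩ | ⟨hall, -⟩ | ⟨hq, -⟩) <;>
        first
          | exact fun v hv => hall v (by omega)
          | exact hq
  -- mutual exclusivity + case analysis
  by_cases hA : predA n S
  · have hB : ¬ predB n S := fun hB => hB.2 hA.2
    have hC : ¬ predC n S := fun hC => hC.2 (Or.inl hA.2)
    rw [if_pos (key.2 (Or.inl hA)), if_pos hA, if_neg hB, if_neg hC, hcard]
    ring
  · by_cases hB : predB n S
    · have hC : ¬ predC n S := fun hC => hC.2 (hB.1 (n-1) (by omega))
      rw [if_pos (key.2 (Or.inr (Or.inl hB))), if_neg hA, if_pos hB, if_neg hC, hcard]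
      ring
    · by_cases hC : predC n S
      · rw [if_pos (key.2 (Or.inr (Or.inr hC))), if_neg hA, if_neg hB, if_pos hC, hcard]
        ring
      · rw [if_neg (fun h => by rcases key.1 h with h|h|h <;> tauto), if_neg hA, if_neg hB,
          if_neg hC]
        ring



def E (n : ℕ) (a b c da db dc : ℤ) : Prop :=
  (pA n).eval (-1) = a ∧ (pB n).eval (-1) = b ∧ (pC n).eval (-1) = c ∧
  4 * ((derivative (pA n)).eval (-1)) = da ∧ 4 * ((derivative (pB n)).eval (-1)) = db ∧
  4 * ((derivative (pC n)).eval (-1)) = dc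

lemma evals (n : ℕ) (hn : 1 ≤ n) :
    (n % 4 = 1 → E n (-1) 0 1 ((n:ℤ)+3) ((n:ℤ)-1) (1-(n:ℤ))) ∧
    (n % 4 = 2 → E n 0 (-1) 0 (-((n:ℤ)+2)) ((n:ℤ)+2) ((n:ℤ)-2)) ∧
    (n % 4 = 3 → E n 1 0 (-1) (-((n:ℤ)+1)) (-((n:ℤ)+1)) ((n:ℤ)+1)) ∧
    (n % 4 = 0 → E n 0 1 0 (n:ℤ) (-(n:ℤ)) (-(n:ℤ))) := by
  induction n, hn using Nat.le_induction with
  | base =>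
    refine ⟨fun _ => ?_, fun h => absurd h (by omega), fun h => absurd h (by omega),
      fun h => absurd h (by omega)⟩
    refine ⟨?_, ?_, ?_, ?_, ?_, ?_⟩ <;> simp [E, base_pA, base_pB, base_pC]
  | succ n hn IH =>
    have eA : (pA (n+1)).eval (-1) =
        -((pA n).eval (-1) + (pB n).eval (-1) + (pC n).eval (-1)) := by
      rw [pA_succ n hn]; simp; try ring
    have eA' : 4 * (derivative (pA (n+1))).eval (-1) =
        4 * ((pA n).eval (-1) + (pB n).eval (-1) + (pC n).eval (-1))
        - (4 * (derivative (pA n)).eval (-1) + 4 * (derivative (pB n)).eval (-1)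
           + 4 * (derivative (pC n)).eval (-1)) := by
      rw [pA_succ n hn, derivative_mul]; simp; try ring
    have eB : (pB (n+1)).eval (-1) = (pA n).eval (-1) := by rw [pB_succ n hn]
    have eB' : 4 * (derivative (pB (n+1))).eval (-1) =
        4 * (derivative (pA n)).eval (-1) := by rw [pB_succ n hn]
    have eC : (pC (n+1)).eval (-1) = (pB n).eval (-1) := by rw [pC_succ n hn]
    have eC' : 4 * (derivative (pC (n+1))).eval (-1) =
        4 * (derivative (pB n)).eval (-1) := by rw [pC_succ n hn]
    have h4 : n % 4 = 1 ∨ n % 4 = 2 ∨ n % 4 = 3 ∨ n % 4 = 0 := by omega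
    rcases h4 with h | h | h | h
    · obtain ⟨a1, a2, a3, a4, a5, a6⟩ := IH.1 h
      refine ⟨fun hc => absurd hc (by omega), fun _ => ?_, fun hc => absurd hc (by omega),
        fun hc => absurd hc (by omega)⟩
      exact ⟨by rw [eA]; linarith, by rw [eB]; linarith, by rw [eC]; linarith,
        by rw [eA']; push_cast; linarith, by rw [eB']; push_cast; linarith,
        by rw [eC']; push_cast; linarith⟩
    · obtain ⟨a1, a2, a3, a4, a5, a6⟩ := IH.2.1 h
      refine ⟨fun hc => absurd hc (by omega), fun hc => absurd hc (by omega), fun _ => ?_,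
        fun hc => absurd hc (by omega)⟩
      exact ⟨by rw [eA]; linarith, by rw [eB]; linarith, by rw [eC]; linarith,
        by rw [eA']; push_cast; linarith, by rw [eB']; push_cast; linarith,
        by rw [eC']; push_cast; linarith⟩
    · obtain ⟨a1, a2, a3, a4, a5, a6⟩ := IH.2.2.1 h
      refine ⟨fun hc => absurd hc (by omega), fun hc => absurd hc (by omega),
        fun hc => absurd hc (by omega), fun _ => ?_⟩
      exact ⟨by rw [eA]; linarith, by rw [eB]; linarith, by rw [eC]; linarith,
        by rw [eA']; push_cast; linarith, by rw [eB']; push_cast; linarith,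
        by rw [eC']; push_cast; linarith⟩
    · obtain ⟨a1, a2, a3, a4, a5, a6⟩ := IH.2.2.2 h
      refine ⟨fun _ => ?_, fun hc => absurd hc (by omega), fun hc => absurd hc (by omega),
        fun hc => absurd hc (by omega)⟩
      exact ⟨by rw [eA]; linarith, by rw [eB]; linarith, by rw [eC]; linarith,
        by rw [eA']; push_cast; linarith, by rw [eB']; push_cast; linarith,
        by rw [eC']; push_cast; linarith⟩

end PathDP

open PathDP

open Classical in
lemma domPoly_eq_sum_dominating {V : Type*} [Fintype V] [DecidableEq V] (G : SimpleGraph V) :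
    domPoly G = ∑ S ∈ Finset.univ.filter
      (fun S : Finset V => ∀ v : V, v ∈ S ∨ ∃ u ∈ S, G.Adj u v), (X : Polynomial ℤ) ^ S.card := by
  rw [domPoly,
    ← Finset.sum_fiberwise_of_maps_to (g := fun S : Finset V => S.card)
      (fun S _ => mem_range.2 (Nat.lt_succ_of_le (card_le_univ S)))
      (fun S => (X : Polynomial ℤ) ^ S.card)]
  refine sum_congr rfl fun i hi => ?_
  rw [domCount]
  rw [sum_congr rfl (fun S hS => by rw [(mem_filter.1 hS).2] :
    ∀ S ∈ (Finset.univ.filter fun S : Finset V => ∀ v : V, v ∈ S ∨ ∃ u ∈ S, G.Adj u v).filter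
      (fun S => S.card = i), (X : Polynomial ℤ) ^ S.card = X ^ i)]
  rw [sum_const, nsmul_eq_mul, filter_filter]
  have hset : (Finset.univ.filter fun S : Finset V =>
      (∀ v : V, v ∈ S ∨ ∃ u ∈ S, G.Adj u v) ∧ S.card = i) =
      (Finset.univ.filter fun S : Finset V =>
      S.card = i ∧ ∀ v : V, v ∈ S ∨ ∃ u ∈ S, G.Adj u v) :=
    Finset.filter_congr fun S _ => and_comm
  rw [hset]
  simp

lemma path_dom_iff {n : ℕ} (S : Finset (Fin n)) :
    (∀ v : Fin n, v ∈ S ∨ ∃ u ∈ S, (pathGraph n).Adj u v) ↔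
    (∀ w < n, Dcond (S.map Fin.valEmbedding) w) := by
  constructor
  · intro h w hw
    rcases h ⟨w, hw⟩ with hv | ⟨u, hu, hadj⟩
    · exact Or.inl (mem_map_of_mem _ hv)
    · have h1' : u.val + 1 = w ∨ w + 1 = u.val := pathGraph_adj.1 hadj
      rcases h1' with h1 | h1
      · exact Or.inr (Or.inr ⟨by omega, by
          rw [show w - 1 = u.val by omega]; exact mem_map_of_mem _ hu⟩)
      · exact Or.inr (Or.inl (by
          rw [show w + 1 = u.val by omega]; exact mem_map_of_mem _ hu))
  · intro h v
    rcases h v.val v.isLt with hv | h1 | ⟨h0, h1⟩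
    · left
      obtain ⟨b, hb, hbv⟩ := mem_map.1 hv
      rwa [show b = v from Fin.val_injective hbv] at hb
    · obtain ⟨u, hu, huv⟩ := mem_map.1 h1
      exact Or.inr ⟨u, hu, pathGraph_adj.2 (Or.inr (by simpa using huv.symm))⟩
    · obtain ⟨u, hu, huv⟩ := mem_map.1 h1
      refine Or.inr ⟨u, hu, pathGraph_adj.2 (Or.inl ?_)⟩
      simp only [Fin.valEmbedding_apply] at huv
      omega

open Classical in
lemma sum_dom_transfer (n : ℕ) :
    (∑ S ∈ Finset.univ.filter
        (fun S : Finset (Fin n) => ∀ v, v ∈ S ∨ ∃ u ∈ S, (pathGraph n).Adj u v),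
      (X : Polynomial ℤ) ^ S.card) =
    ∑ T ∈ (range n).powerset,
      if (∀ w < n, Dcond T w) then (X : Polynomial ℤ) ^ T.card else 0 := by
  rw [← sum_filter (s := (range n).powerset) (p := fun T => ∀ w < n, Dcond T w)]
  refine Finset.sum_bij (fun S _ => S.map Fin.valEmbedding) ?_ ?_ ?_ ?_
  · intro S hS
    simp only [mem_filter, mem_univ, true_and] at hS
    simp only [mem_filter, mem_powerset]
    refine ⟨fun a ha => ?_, (path_dom_iff S).1 hS⟩
    obtain ⟨b, -, hb⟩ := mem_map.1 ha
    rw [← hb]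
    exact mem_range.2 b.isLt
  · intro S₁ h₁ S₂ h₂ h
    exact Finset.map_injective _ h
  · intro T hT
    rw [mem_filter, mem_powerset] at hT
    have hbd : ∀ m ∈ T, m < n := fun m hm => mem_range.1 (hT.1 hm)
    refine ⟨T.attachFin hbd, ?_, ?_⟩
    · simp only [mem_filter, mem_univ, true_and]
      have hmap : (T.attachFin hbd).map Fin.valEmbedding = T := by
        ext a
        simp only [mem_map, Fin.valEmbedding_apply, mem_attachFin]
        constructor
        · rintro ⟨b, hb, rfl⟩; exact hb
        · intro ha; exact ⟨⟨a, hbd a ha⟩, ha, rfl⟩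
      refine (path_dom_iff _).2 ?_
      rw [hmap]; exact hT.2
    · ext a
      simp only [mem_map, Fin.valEmbedding_apply, mem_attachFin]
      constructor
      · rintro ⟨b, hb, rfl⟩; exact hb
      · intro ha; exact ⟨⟨a, hbd a ha⟩, ha, rfl⟩
  · intro S hS
    rw [Finset.card_map]


lemma pAB_eq (n : ℕ) : pA n + pB n = ∑ T ∈ (range n).powerset,
    if (∀ w < n, Dcond T w) then (X : Polynomial ℤ) ^ T.card else 0 := by
  rw [pA, pB, ← sum_add_distrib]
  refine sum_congr rfl fun S hS => ?_
  by_cases hA : predA n S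
  · rw [if_pos hA, if_neg (fun hB : predB n S => hB.2 hA.2), if_pos hA.1, add_zero]
  · by_cases hB : predB n S
    · rw [if_neg hA, if_pos hB, if_pos hB.1, zero_add]
    · have h : ¬ ∀ v < n, Dcond S v := fun h => by
        by_cases hm : (n - 1) ∈ S
        · exact hA ⟨h, hm⟩
        · exact hB ⟨h, hm⟩
      rw [if_neg hA, if_neg hB, if_neg h, add_zero]

lemma domPoly_path (n : ℕ) : domPoly (pathGraph n) = pA n + pB n := by
  rw [domPoly_eq_sum_dominating, pAB_eq]
  have h := sum_dom_transfer n
  convert h using 3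


theorem domPoly_path_deriv_neg_one (n : ℕ) (hn : 1 ≤ n) :
    (n % 4 = 0 ∨ n % 4 = 2 →
        (derivative (domPoly (pathGraph n))).eval (-1) = 0) ∧
    (n % 4 = 1 →
        2 * (derivative (domPoly (pathGraph n))).eval (-1) = (n : ℤ) + 1) ∧
    (n % 4 = 3 →
        2 * (derivative (domPoly (pathGraph n))).eval (-1) = -((n : ℤ) + 1)) := by
  have key := evals n hn
  have hD : (derivative (domPoly (pathGraph n))).eval (-1) =
      (derivative (pA n)).eval (-1) + (derivative (pB n)).eval (-1) := by
    rw [domPoly_path, derivative_add, eval_add]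
  refine ⟨?_, ?_, ?_⟩
  · rintro (h | h)
    · obtain ⟨-, -, -, a4, a5, -⟩ := key.2.2.2 h
      rw [hD]; linarith
    · obtain ⟨-, -, -, a4, a5, -⟩ := key.2.1 h
      rw [hD]; linarith
  · intro h
    obtain ⟨-, -, -, a4, a5, -⟩ := key.1 h
    rw [hD]; linarith
  · intro h
    obtain ⟨-, -, -, a4, a5, -⟩ := key.2.2.1 h
    rw [hD]; linarith
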